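/- Stereographic projection maps round circles on S^n to round circles or lines in ℝ^n: if C ⊂ S^n is the intersection of S^n with a 2-dimensional affine subspace of ℝ^{n+1} not passing through the projection point p, then its image under stereographic projection from p is a circle (intersection of a 2-dimensional affine subspace with a sphere) in ℝ^n ≅ T_p S^n. -/

import Mathlib

open scoped RealInnerProductSpace

/-- Stereographic projection from `p ∈ S^n` onto the hyperplane through the origin
orthogonal to `p`: `q ↦ (q - ⟪q,p⟫•p)/(1 - ⟪q,p⟫)`. -/
noncomputable def stereoProj {n : ℕ} (p q : EuclideanSpace ℝ (Fin (n + 1))) :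
    EuclideanSpace ℝ (Fin (n + 1)) :=
  (1 - ⟪q, p⟫)⁻¹ • (q - ⟪q, p⟫ • p)

section general

variable {F : Type*} [NormedAddCommGroup F] [InnerProductSpace ℝ F]

/-- Same formula as `stereoProj`, in a general real inner product space. -/
noncomputable def sProj (p q : F) : F := (1 - ⟪q, p⟫)⁻¹ • (q - ⟪q, p⟫ • p)

/-- Inverse of stereographic projection, defined on the hyperplane `⟪y,p⟫ = 0`. -/
noncomputable def sInv (p y : F) : F := (⟪y, y⟫ + 1)⁻¹ • ((2:ℝ) • y + (⟪y, y⟫ - 1) • p)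

/-- Auxiliary quantity: `(⟪y,y⟫+1) • (sInv p y - x₀)`, which is affine-quadratic in `y`. -/
noncomputable def cF (p x₀ y : F) : F := (2:ℝ) • y + ⟪y, y⟫ • (p - x₀) - (p + x₀)

lemma inner_sProj_p (p q : F) (hpp : ⟪p,p⟫ = 1) : ⟪sProj p q, p⟫ = 0 := by
  simp [sProj, inner_sub_left, real_inner_smul_left, hpp]
  right; rw [← real_inner_self_eq_norm_sq, hpp]; ring

lemma inner_sProj_self (p q : F) (hpp : ⟪p,p⟫ = 1)
    (hq : ⟪q,q⟫ = 1) (hs : ⟪q,p⟫ ≠ 1) :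
    ⟪sProj p q, sProj p q⟫ = (1 + ⟪q,p⟫)/(1 - ⟪q,p⟫) := by
  have h1 : (1:ℝ) - ⟪q,p⟫ ≠ 0 := sub_ne_zero.2 (Ne.symm hs)
  have hc : ⟪p,q⟫ = ⟪q,p⟫ := real_inner_comm q p
  simp only [sProj, real_inner_smul_left, real_inner_smul_right, inner_sub_left,
    inner_sub_right, hpp, hq, hc]
  field_simp
  ring

lemma sInv_sProj (p q : F) (hpp : ⟪p,p⟫ = 1)
    (hq : ⟪q,q⟫ = 1) (hs : ⟪q,p⟫ ≠ 1) :
    sInv p (sProj p q) = q := by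
  have h1 : (1:ℝ) - ⟪q,p⟫ ≠ 0 := sub_ne_zero.2 (Ne.symm hs)
  rw [sInv, inner_sProj_self p q hpp hq hs, sProj]
  match_scalars
  all_goals field_simp
  all_goals ring

lemma inner_sInv_self (p y : F) (hpp : ⟪p,p⟫ = 1)
    (hy : ⟪y,p⟫ = 0) : ⟪sInv p y, sInv p y⟫ = 1 := by
  have h0 : (0:ℝ) ≤ ⟪y,y⟫ := real_inner_self_nonneg
  have h1 : ⟪y,y⟫ + 1 ≠ 0 := by linarith
  have hpy : ⟪p,y⟫ = 0 := (real_inner_comm p y).symm.trans hy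
  simp only [sInv, real_inner_smul_left, real_inner_smul_right, inner_add_left,
    inner_add_right, hpp, hy, hpy]
  field_simp
  ring

lemma inner_sInv_p (p y : F) (hpp : ⟪p,p⟫ = 1)
    (hy : ⟪y,p⟫ = 0) : ⟪sInv p y, p⟫ = (⟪y,y⟫ - 1)/(⟪y,y⟫ + 1) := by
  simp only [sInv, real_inner_smul_left, inner_add_left, hpp, hy]
  field_simp
  ring

lemma sProj_sInv (p y : F) (hpp : ⟪p,p⟫ = 1)
    (hy : ⟪y,p⟫ = 0) : sProj p (sInv p y) = y := by
  have h0 : (0:ℝ) ≤ ⟪y,y⟫ := real_inner_self_nonneg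
  have h1 : ⟪y,y⟫ + 1 ≠ 0 := by linarith
  rw [sProj, inner_sInv_p p y hpp hy, sInv]
  match_scalars
  all_goals field_simp
  all_goals ring

lemma cF_eq (p x₀ y : F) (h1 : ⟪y,y⟫ + 1 ≠ 0) :
    cF p x₀ y = (⟪y,y⟫ + 1) • (sInv p y - x₀) := by
  rw [cF, sInv]
  match_scalars
  all_goals field_simp
  all_goals ring

lemma cF_sub (p x₀ y z : F) :
    cF p x₀ y - cF p x₀ z = (2:ℝ) • (y - z) + (⟪y,y⟫ - ⟪z,z⟫) • (p - x₀) := by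
  rw [cF, cF]
  module

lemma inner_cF (a p x₀ y : F) :
    ⟪a, cF p x₀ y⟫ = 2*⟪a,y⟫ + ⟪y,y⟫*⟪a, p - x₀⟫ - ⟪a, p + x₀⟫ := by
  simp [cF, inner_add_right, inner_sub_right, real_inner_smul_right]

/-- Scalar helper 1. -/
lemma scalar1 (W X Z B : ℝ) (hW : W ≠ 0) (h : 2*Z + X*W - B = 0) :
    X + 2*W⁻¹*Z + W⁻¹ = (B + 1)/W := by
  field_simp
  linarith

/-- Scalar helper 2. -/
lemma scalar2 (W X X1 Z Z1 t : ℝ) (hW : W ≠ 0) (h1 : Z - Z1 = t*W)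
    (h2 : X + 2*W⁻¹*Z = X1 + 2*W⁻¹*Z1) : X - X1 = -2*t := by
  have e : W⁻¹ * W = 1 := inv_mul_cancel₀ hW
  linear_combination h2 - 2*W⁻¹*h1 - 2*t*e

end general

lemma stereoProj_eq_sProj {n : ℕ} (p q : EuclideanSpace ℝ (Fin (n + 1))) :
    stereoProj p q = sProj p q := rfl

set_option maxHeartbeats 1000000 in
/-- Stereographic projection maps round circles to round circles: if `C` is the
intersection of the unit sphere with a 2-dimensional affine subspace not containing the
projection point `p`, and `C` has more than one point, then the image of `C` under
stereographic projection from `p` is a round circle: the intersection of a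
2-dimensional affine subspace with a sphere of positive radius. -/
theorem stereoProj_round_circle {n : ℕ} (p : EuclideanSpace ℝ (Fin (n + 1)))
    (hp : ‖p‖ = 1) (A : AffineSubspace ℝ (EuclideanSpace ℝ (Fin (n + 1))))
    (hA : Module.finrank ℝ A.direction = 2) (hpA : p ∉ A)
    (htwo : ∃ x ∈ Metric.sphere (0 : EuclideanSpace ℝ (Fin (n + 1))) 1 ∩ (A : Set _),
        ∃ y ∈ Metric.sphere (0 : EuclideanSpace ℝ (Fin (n + 1))) 1 ∩ (A : Set _), x ≠ y) :
    ∃ (c : EuclideanSpace ℝ (Fin (n + 1))) (r : ℝ)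
      (A' : AffineSubspace ℝ (EuclideanSpace ℝ (Fin (n + 1)))),
      0 < r ∧ Module.finrank ℝ A'.direction = 2 ∧
      stereoProj p '' (Metric.sphere (0 : EuclideanSpace ℝ (Fin (n + 1))) 1 ∩ (A : Set _)) =
        (A' : Set _) ∩ Metric.sphere c r := by
  classical
  obtain ⟨x₀, ⟨hx₀S, hx₀A⟩, x₁, ⟨hx₁S, hx₁A⟩, hne⟩ := htwo
  have hpp : ⟪p, p⟫ = 1 := by
    rw [real_inner_self_eq_norm_sq, hp]; norm_num
  have hone : ∀ q : EuclideanSpace ℝ (Fin (n+1)), ‖q‖ = 1 ↔ ⟪q,q⟫ = 1 := by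
    intro q
    rw [real_inner_self_eq_norm_sq]
    constructor
    · intro h; rw [h]; norm_num
    · intro h; nlinarith [norm_nonneg q]
  have hx₀ : ⟪x₀,x₀⟫ = 1 := (hone x₀).1 (by simpa using hx₀S)
  have hx₁ : ⟪x₁,x₁⟫ = 1 := (hone x₁).1 (by simpa using hx₁S)
  have hq_ne : ∀ q : EuclideanSpace ℝ (Fin (n+1)), ⟪q,q⟫ = 1 → q ∈ A → ⟪q,p⟫ ≠ 1 := by
    intro q hq hqA h
    have hc : ⟪p,q⟫ = 1 := (real_inner_comm q p).trans h
    have h2 : ⟪q - p, q - p⟫ = 0 := by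
      simp only [inner_sub_left, inner_sub_right, hq, hpp, h, hc]; norm_num
    rw [inner_self_eq_zero, sub_eq_zero] at h2
    exact hpA (h2 ▸ hqA)
  set V := A.direction with hVdef
  set v₀ : EuclideanSpace ℝ (Fin (n+1)) :=
    (V.orthogonalProjectionOnto (p - x₀) : EuclideanSpace ℝ (Fin (n+1))) with hv₀def
  have hv₀ : v₀ ∈ V := Submodule.coe_mem _
  set a : EuclideanSpace ℝ (Fin (n+1)) := p - x₀ - v₀ with hadef
  have haV : a ∈ Vᗮ := Submodule.sub_starProjection_mem_orthogonal (K := V) (p - x₀)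
  have ha_inner : ∀ v ∈ V, ⟪a, v⟫ = 0 := by
    intro v hv
    rw [← real_inner_comm a v]
    exact (Submodule.mem_orthogonal V a).1 haV v hv
  have hpx₀ : p - x₀ ∉ V := by
    intro h
    apply hpA
    have h2 := AffineSubspace.vadd_mem_of_mem_direction h hx₀A
    simpa [vadd_eq_add, sub_add_cancel] using h2
  have ha0 : a ≠ 0 := by
    intro h
    apply hpx₀
    have h2 : p - x₀ = v₀ := by rwa [hadef, sub_eq_zero] at h
    rw [h2]; exact hv₀
  have haa : (0:ℝ) < ⟪a,a⟫ := by
    rw [real_inner_self_eq_norm_sq]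
    exact pow_pos (norm_pos_iff.2 ha0) 2
  have hpa : p - x₀ = a + v₀ := by rw [hadef]; abel
  have hax : ⟪a, p - x₀⟫ = ⟪a,a⟫ := by
    rw [hpa, inner_add_right, ha_inner v₀ hv₀, add_zero]
  set β : ℝ := ⟪a, p + x₀⟫ with hβ
  set c : EuclideanSpace ℝ (Fin (n+1)) := -(⟪a,a⟫)⁻¹ • a with hcdef
  set ρ : ℝ := (β + 1)/⟪a,a⟫ with hρdef
  set G : Set (EuclideanSpace ℝ (Fin (n+1))) :=
    {y | ⟪y,p⟫ = 0 ∧ cF p x₀ y ∈ V} with hGdef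
  -- the image equals G
  have himage : stereoProj p '' (Metric.sphere 0 1 ∩ (A : Set _)) = G := by
    ext y
    constructor
    · rintro ⟨q, ⟨hqS, hqA⟩, rfl⟩
      have hqq : ⟪q,q⟫ = 1 := (hone q).1 (by simpa using hqS)
      have hqp := hq_ne q hqq hqA
      rw [stereoProj_eq_sProj]
      refine ⟨inner_sProj_p p q hpp, ?_⟩
      have hinv : sInv p (sProj p q) = q := sInv_sProj p q hpp hqq hqp
      have h1 : ⟪sProj p q, sProj p q⟫ + 1 ≠ 0 := by
        have := real_inner_self_nonneg (x := sProj p q); linarith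
      rw [cF_eq p x₀ _ h1, hinv]
      refine Submodule.smul_mem _ _ ?_
      have := (AffineSubspace.vsub_right_mem_direction_iff_mem hx₀A q).2 hqA
      simpa [vsub_eq_sub] using this
    · rintro ⟨hy1, hy2⟩
      have h0 : (0:ℝ) ≤ ⟪y,y⟫ := real_inner_self_nonneg
      have h1 : ⟪y,y⟫ + 1 ≠ 0 := by linarith
      have hqq : ⟪sInv p y, sInv p y⟫ = 1 := inner_sInv_self p y hpp hy1
      refine ⟨sInv p y, ⟨?_, ?_⟩, ?_⟩
      · simpa using (hone _).2 hqq
      · have h2 : sInv p y - x₀ = (⟪y,y⟫ + 1)⁻¹ • cF p x₀ y := by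
          rw [cF_eq p x₀ y h1, smul_smul, inv_mul_cancel₀ h1, one_smul]
        have h3 : sInv p y - x₀ ∈ V := h2 ▸ Submodule.smul_mem _ _ hy2
        have := (AffineSubspace.vsub_right_mem_direction_iff_mem hx₀A (sInv p y)).1
          (by simpa [vsub_eq_sub] using h3)
        exact this
      · rw [stereoProj_eq_sProj]; exact sProj_sInv p y hpp hy1
  -- members of G lie on the sphere around c
  have haa' : (⟪a,a⟫:ℝ) ≠ 0 := ne_of_gt haa
  have expand : ∀ (s : ℝ) (y : EuclideanSpace ℝ (Fin (n+1))),
      ⟪y - (-s) • a, y - (-s) • a⟫ = ⟪y,y⟫ + 2*s*⟪a,y⟫ + s*s*⟪a,a⟫ := by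
    intro s y
    have hya : ⟪y,a⟫ = ⟪a,y⟫ := real_inner_comm a y
    simp only [inner_sub_left, inner_sub_right, real_inner_smul_left,
      real_inner_smul_right, hya]
    ring
  have hyc : ∀ y : EuclideanSpace ℝ (Fin (n+1)),
      ⟪y - c, y - c⟫ = ⟪y,y⟫ + 2*(⟪a,a⟫)⁻¹*⟪a,y⟫ + (⟪a,a⟫)⁻¹ := by
    intro y
    rw [hcdef, expand (⟪a,a⟫)⁻¹ y]
    have h5 : (⟪a,a⟫:ℝ)⁻¹ * (⟪a,a⟫:ℝ)⁻¹ * ⟪a,a⟫ = (⟪a,a⟫:ℝ)⁻¹ := by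
      rw [mul_assoc, inv_mul_cancel₀ haa', mul_one]
    rw [h5]
  have hsphereG : ∀ y ∈ G, ⟪y - c, y - c⟫ = ρ := by
    rintro y ⟨hy1, hy2⟩
    have h2 : ⟪a, cF p x₀ y⟫ = 0 := ha_inner _ hy2
    rw [inner_cF, hax, ← hβ] at h2
    rw [hyc y, hρdef]
    exact scalar1 ⟪a,a⟫ ⟪y,y⟫ ⟪a,y⟫ β haa' h2
  set y₁ : EuclideanSpace ℝ (Fin (n+1)) := stereoProj p x₀ with hy₁def
  set y₂ : EuclideanSpace ℝ (Fin (n+1)) := stereoProj p x₁ with hy₂def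
  have hy₁G : y₁ ∈ G := himage ▸ ⟨x₀, ⟨hx₀S, hx₀A⟩, rfl⟩
  have hy₂G : y₂ ∈ G := himage ▸ ⟨x₁, ⟨hx₁S, hx₁A⟩, rfl⟩
  have hy₁₂ : y₁ ≠ y₂ := by
    intro h
    apply hne
    have e0 : sInv p y₁ = x₀ := sInv_sProj p x₀ hpp hx₀ (hq_ne x₀ hx₀ hx₀A)
    have e1 : sInv p y₂ = x₁ := sInv_sProj p x₁ hpp hx₁ (hq_ne x₁ hx₁ hx₁A)
    rw [← e0, ← e1, h]
  have hρ0 : 0 ≤ ρ := by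
    rw [← hsphereG y₁ hy₁G]
    exact real_inner_self_nonneg
  have hρpos : 0 < ρ := by
    rcases lt_or_eq_of_le hρ0 with h | h
    · exact h
    · exfalso
      apply hy₁₂
      have e₁ : y₁ - c = 0 := by
        rw [← inner_self_eq_zero (𝕜 := ℝ), hsphereG y₁ hy₁G, ← h]
      have e₂ : y₂ - c = 0 := by
        rw [← inner_self_eq_zero (𝕜 := ℝ), hsphereG y₂ hy₂G, ← h]
      rw [sub_eq_zero] at e₁ e₂
      rw [e₁, e₂]
  set r : ℝ := Real.sqrt ρ with hrdef
  have hr : 0 < r := Real.sqrt_pos.2 hρpos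
  have hdist : ∀ y : EuclideanSpace ℝ (Fin (n+1)), dist y c = r ↔ ⟪y - c, y - c⟫ = ρ := by
    intro y
    rw [dist_eq_norm, hrdef]
    have : ‖y - c‖ = Real.sqrt ⟪y - c, y - c⟫ := by
      rw [real_inner_self_eq_norm_sq, Real.sqrt_sq (norm_nonneg _)]
    rw [this, Real.sqrt_inj real_inner_self_nonneg hρ0]
  -- the affine subspace
  set U : Submodule ℝ (EuclideanSpace ℝ (Fin (n+1))) := V ⊔ (ℝ ∙ a) with hUdef
  have hspan_le : (ℝ ∙ a) ≤ Vᗮ := (Submodule.span_singleton_le_iff_mem a Vᗮ).2 haV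
  have hinf : V ⊓ (ℝ ∙ a) = ⊥ := by
    rw [eq_bot_iff]
    rintro w ⟨hw1, hw2⟩
    exact (Submodule.disjoint_def.1 V.orthogonal_disjoint) w hw1 (hspan_le hw2)
  have hUrank : Module.finrank ℝ U = 3 := by
    have h2 := Submodule.finrank_sup_add_finrank_inf_eq V (ℝ ∙ a)
    rw [hinf, finrank_bot, finrank_span_singleton ha0, hA] at h2
    simpa [hUdef] using h2
  set D : Submodule ℝ (EuclideanSpace ℝ (Fin (n+1))) := U ⊓ (ℝ ∙ p)ᗮ with hDdef
  have hpx₀U : p - x₀ ∈ U := by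
    rw [hpa]
    exact Submodule.add_mem U (Submodule.mem_sup_right (Submodule.mem_span_singleton_self a))
      (Submodule.mem_sup_left hv₀)
  have hDrank : Module.finrank ℝ D = 2 := by
    set f : U →ₗ[ℝ] ℝ := (innerSL ℝ p).toLinearMap.comp U.subtype with hfdef
    have hDmap : D = (LinearMap.ker f).map U.subtype := by
      ext x
      simp only [hDdef, Submodule.mem_inf, Submodule.mem_map, LinearMap.mem_ker,
        Submodule.mem_orthogonal_singleton_iff_inner_right, hfdef, LinearMap.coe_comp,
        Function.comp_apply, ContinuousLinearMap.coe_coe, innerSL_apply_apply,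
        Submodule.coe_subtype]
      constructor
      · rintro ⟨hx1, hx2⟩
        exact ⟨⟨x, hx1⟩, hx2, rfl⟩
      · rintro ⟨⟨u, hu⟩, h1, rfl⟩
        exact ⟨hu, h1⟩
    have hrange : Module.finrank ℝ (LinearMap.range f) = 1 := by
      have hle : Module.finrank ℝ (LinearMap.range f) ≤ 1 := by
        simpa using (LinearMap.range f).finrank_le
      have hne0 : f ⟨p - x₀, hpx₀U⟩ ≠ 0 := by
        have hval : f ⟨p - x₀, hpx₀U⟩ = 1 - ⟪p, x₀⟫ := by
          show ⟪p, p - x₀⟫ = 1 - ⟪p, x₀⟫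
          rw [inner_sub_right, hpp]
        rw [hval]
        intro h
        have h4 : ⟪p, x₀⟫ = 1 := by linarith
        exact hq_ne x₀ hx₀ hx₀A ((real_inner_comm p x₀).trans h4)
      have hpos : 0 < Module.finrank ℝ (LinearMap.range f) :=
        Module.finrank_pos_iff_exists_ne_zero.2
          ⟨⟨f ⟨p - x₀, hpx₀U⟩, LinearMap.mem_range_self f _⟩, by simpa using hne0⟩
      omega
    have hrn := LinearMap.finrank_range_add_finrank_ker f
    rw [hUrank, hrange] at hrn
    rw [hDmap, Submodule.finrank_map_subtype_eq]
    omega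
  refine ⟨c, r, AffineSubspace.mk' y₁ D, hr, ?_, ?_⟩
  · rw [AffineSubspace.direction_mk']; exact hDrank
  · rw [himage]
    ext y
    simp only [Set.mem_inter_iff, SetLike.mem_coe, AffineSubspace.mem_mk',
      Metric.mem_sphere, hdist y, vsub_eq_sub, hDdef, Submodule.mem_inf,
      Submodule.mem_orthogonal_singleton_iff_inner_right]
    constructor
    · rintro hyG
      obtain ⟨hy1, hy2⟩ := hyG
      obtain ⟨hz1, hz2⟩ := hy₁G
      refine ⟨⟨?_, ?_⟩, hsphereG y ⟨hy1, hy2⟩⟩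
      · -- y - y₁ ∈ U
        have hd : cF p x₀ y - cF p x₀ y₁ ∈ V := Submodule.sub_mem V hy2 hz2
        have heq : y - y₁ = (2⁻¹:ℝ) • ((cF p x₀ y - cF p x₀ y₁)
            - (⟪y,y⟫ - ⟪y₁,y₁⟫) • v₀) + (-(⟪y,y⟫ - ⟪y₁,y₁⟫)/2) • a := by
          rw [cF_sub p x₀ y y₁, hpa]
          match_scalars <;> ring
        rw [heq]
        refine Submodule.add_mem_sup ?_ ?_
        · exact Submodule.smul_mem _ _ (Submodule.sub_mem _ hd (Submodule.smul_mem _ _ hv₀))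
        · exact Submodule.smul_mem _ _ (Submodule.mem_span_singleton_self a)
      · -- ⟪p, y - y₁⟫ = 0
        rw [inner_sub_right]
        have h1 : ⟪p,y⟫ = 0 := (real_inner_comm p y).symm.trans hy1
        have h2 : ⟪p,y₁⟫ = 0 := (real_inner_comm p y₁).symm.trans hz1
        rw [h1, h2, sub_zero]
    · rintro ⟨⟨hyU, hyP⟩, hySph⟩
      obtain ⟨hz1, hz2⟩ := hy₁G
      have hy1 : ⟪y,p⟫ = 0 := by
        have h1 : ⟪p, y⟫ - ⟪p, y₁⟫ = 0 := by rwa [← inner_sub_right]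
        have h2 : ⟪p,y₁⟫ = 0 := (real_inner_comm p y₁).symm.trans hz1
        rw [← real_inner_comm y p]
        linarith
      refine ⟨hy1, ?_⟩
      obtain ⟨v, hv, w, hw, hvw⟩ := Submodule.mem_sup.1 hyU
      obtain ⟨t, rfl⟩ := Submodule.mem_span_singleton.1 hw
      have h2 : ⟪a, y - y₁⟫ = t * ⟪a,a⟫ := by
        rw [← hvw, inner_add_right, ha_inner v hv, real_inner_smul_right]
        ring
      have hs1 : ⟪y - c, y - c⟫ = ρ := hySph
      have hs2 := hsphereG y₁ ⟨hz1, hz2⟩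
      rw [hyc y] at hs1
      rw [hyc y₁] at hs2
      have hΔ : ⟪y,y⟫ - ⟪y₁,y₁⟫ = -2 * t := by
        have h3 : ⟪a, y⟫ - ⟪a, y₁⟫ = t * ⟪a,a⟫ := by
          rw [← inner_sub_right]; exact h2
        have h4 : ⟪y,y⟫ + 2*(⟪a,a⟫)⁻¹*⟪a,y⟫ = ⟪y₁,y₁⟫ + 2*(⟪a,a⟫)⁻¹*⟪a,y₁⟫ := by
          linarith [hs1, hs2]
        exact scalar2 ⟪a,a⟫ ⟪y,y⟫ ⟪y₁,y₁⟫ ⟪a,y⟫ ⟪a,y₁⟫ t haa' h3 h4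
      have heq : cF p x₀ y = cF p x₀ y₁ + (2:ℝ) • v + (-2*t) • v₀ := by
        have e : cF p x₀ y - cF p x₀ y₁ = (2:ℝ) • (y - y₁) + (⟪y,y⟫ - ⟪y₁,y₁⟫) • (p - x₀) :=
          cF_sub p x₀ y y₁
        rw [← hvw, hΔ, hpa] at e
        have : cF p x₀ y = cF p x₀ y₁ + ((2:ℝ) • (v + t • a) + (-2*t : ℝ) • (a + v₀)) := by
          rw [← e]; abel
        rw [this]
        match_scalars <;> ring
      rw [heq]
      exact Submodule.add_mem _ (Submodule.add_mem _ hz2 (Submodule.smul_mem _ _ hv))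
        (Submodule.smul_mem _ _ hv₀)
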